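/- Consider N ≥ 2 buyers with valuations v₁ > v₂ > ... > v_N and arbitrary bids b₁,...,b_N. Let v⁻ and b⁻ denote the second-highest valuation and second-highest bid respectively, let q_i ∈ {0,1} indicate whether buyer i has the (strictly) highest bid, and let s_i = (v_i - b_i)₊ be the shading amount of buyer i. Then (v⁻ - b⁻)₊ ≤ max_{i ∈ [N]} s_i (1 - q_i). -/

import Mathlib

/-- All of `Fin N` is a nonempty finset when `2 ≤ N`. -/
def finUnivNonempty {N : ℕ} (hN : 2 ≤ N) : (Finset.univ : Finset (Fin N)).Nonempty :=
  ⟨⟨0, by omega⟩, Finset.mem_univ _⟩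

/-- Removing one element from `Fin N` leaves a nonempty finset when `2 ≤ N`. -/
def finEraseNonempty {N : ℕ} (hN : 2 ≤ N) (i : Fin N) :
    (Finset.univ.erase i).Nonempty := by
  rw [← Finset.card_pos, Finset.card_erase_of_mem (Finset.mem_univ i),
    Finset.card_univ, Fintype.card_fin]
  omega

/-- The second-highest value of `x : Fin N → ℝ` (for `2 ≤ N`):
`max_i min(x i, max_{j ≠ i} x j)`. -/
noncomputable def secondMax {N : ℕ} (hN : 2 ≤ N) (x : Fin N → ℝ) : ℝ :=
  Finset.univ.sup' (finUnivNonempty hN) fun i =>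
    min (x i) ((Finset.univ.erase i).sup' (finEraseNonempty hN i) x)

open Classical in
/-- With valuations `v₁ > ⋯ > v_N`, distinct bids `b`, allocation
indicators `q` (strictly highest bid) and shading amounts `s_i = (v_i - b_i)₊`,
the drop in the second-highest value satisfies
`(v⁻ - b⁻)₊ ≤ max_i s_i (1 - q_i)`. -/
theorem second_highest_drop_le_max_shading
    {N : ℕ} (hN : 2 ≤ N) (v b q s : Fin N → ℝ)
    (hv : StrictAnti v) (hb : Function.Injective b)
    (hq : ∀ i, q i = if (∀ j, j ≠ i → b j < b i) then 1 else 0)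
    (hs : ∀ i, s i = max (v i - b i) 0) :
    max (secondMax hN v - secondMax hN b) 0 ≤
      Finset.univ.sup' (finUnivNonempty hN) (fun i => s i * (1 - q i)) := by
  obtain ⟨iStar, -, hmax⟩ :=
    Finset.exists_max_image Finset.univ b (finUnivNonempty hN)
  have hmax' : ∀ j, b j ≤ b iStar := fun j => hmax j (Finset.mem_univ _)
  set k : Fin N := if iStar = ⟨0, by omega⟩ then ⟨1, by omega⟩ else ⟨0, by omega⟩
    with hk
  have hkne : k ≠ iStar := by
    rw [hk]
    split
    · rename_i h; rw [h]; intro hc; exact absurd (congrArg Fin.val hc) (by simp)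
    · rename_i h; exact fun hc => h hc.symm
  have hk1 : (k : ℕ) ≤ 1 := by rw [hk]; split <;> simp
  -- secondMax v ≤ v k
  have hv1 : secondMax hN v ≤ v ⟨1, by omega⟩ := by
    apply Finset.sup'_le
    intro i _
    by_cases hi : (1 : ℕ) ≤ (i : ℕ)
    · exact le_trans (min_le_left _ _) (hv.antitone (by simpa [Fin.le_def] using hi))
    · refine le_trans (min_le_right _ _) (Finset.sup'_le _ _ ?_)
      intro j hj
      have hj0 : j ≠ i := (Finset.mem_erase.mp hj).1
      have hji : (1 : ℕ) ≤ (j : ℕ) := by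
        rcases Nat.eq_zero_or_pos (j : ℕ) with h0 | h0
        · exact absurd (Fin.ext (by omega)) hj0
        · exact h0
      exact hv.antitone (by simpa [Fin.le_def] using hji)
  have hvk : v ⟨1, by omega⟩ ≤ v k := hv.antitone (by simpa [Fin.le_def] using hk1)
  -- b k ≤ secondMax b
  have hb2 : b k ≤ secondMax hN b := by
    have h1 : b k ≤ min (b iStar)
        ((Finset.univ.erase iStar).sup' (finEraseNonempty hN iStar) b) :=
      le_min (hmax' k)
        (Finset.le_sup' b (Finset.mem_erase.mpr ⟨hkne, Finset.mem_univ _⟩))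
    exact le_trans h1 (Finset.le_sup'
      (fun i => min (b i) ((Finset.univ.erase i).sup' (finEraseNonempty hN i) b))
      (Finset.mem_univ iStar))
  have hbik : b k < b iStar :=
    lt_of_le_of_ne (hmax' k) (fun h => hkne (hb h))
  have hqk : q k = 0 := by
    rw [hq, if_neg]
    intro hall
    exact absurd (hall iStar (Ne.symm hkne)) (not_lt.mpr hbik.le)
  have hrhs : s k ≤ Finset.univ.sup' (finUnivNonempty hN) (fun i => s i * (1 - q i)) := by
    have := Finset.le_sup' (fun i => s i * (1 - q i)) (Finset.mem_univ k)
    simp only [hqk, sub_zero, mul_one] at this; exact this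
  apply max_le
  · calc secondMax hN v - secondMax hN b ≤ v k - b k :=
          sub_le_sub (hv1.trans hvk) hb2
      _ ≤ s k := by rw [hs]; exact le_max_left _ _
      _ ≤ _ := hrhs
  · exact le_trans (by rw [hs k]; exact le_max_right _ _) hrhs
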